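/- Let d ≥ 1, let p be a Borel probability measure on ℂ that is non-atomic (p({z}) = 0 for every z ∈ ℂ) and whose topological support is all of ℂ, and let P* be the probability measure on the space of sequences of d×d complex matrices (Matrix)^ℕ under which all the entries of all the matrices A_1, A_2, … are independent with common law p (the infinite product over n ∈ ℕ of the d²-fold product measure of p). Then for P*-almost every sequence (A_n)_{n≥1}: P_n ≠ 0 for every n, and the sequence n ↦ P_n/‖P_n‖ does not converge. -/

import Mathlib

open Filter Matrix MeasureTheory ProbabilityTheory

/-- `‖X‖`: sum of the moduli of the entries of a complex matrix. -/
noncomputable def matEntrySumNorm {d : ℕ} (M : Matrix (Fin d) (Fin d) ℂ) : ℝ :=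
  ∑ i, ∑ j, ‖M i j‖

/-- `P_n = A_1 ⋯ A_n` (ordered product). -/
noncomputable def matProd {d : ℕ} (A : ℕ → Matrix (Fin d) (Fin d) ℂ) (n : ℕ) :
    Matrix (Fin d) (Fin d) ℂ :=
  ((List.range n).map fun i => A (i + 1)).prod

/-- The Borel σ-algebra on the space of `d × d` complex matrices. -/
noncomputable instance matrixMeasurableSpace {d : ℕ} : MeasurableSpace (Matrix (Fin d) (Fin d) ℂ) :=
  borel _

instance matrixBorelSpace {d : ℕ} : BorelSpace (Matrix (Fin d) (Fin d) ℂ) :=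
  ⟨rfl⟩

namespace NPDAS

variable {d : ℕ}

/-! ### Elementary facts about `matEntrySumNorm` and `matProd` -/

lemma matProd_zero (A : ℕ → Matrix (Fin d) (Fin d) ℂ) : matProd A 0 = 1 := rfl

lemma matProd_succ (A : ℕ → Matrix (Fin d) (Fin d) ℂ) (n : ℕ) :
    matProd A (n + 1) = matProd A n * A (n + 1) := by
  unfold matProd
  rw [List.range_succ, List.map_append, List.prod_append, List.map_singleton,
    List.prod_singleton]

lemma matProd_congr {A B : ℕ → Matrix (Fin d) (Fin d) ℂ} {n : ℕ}
    (h : ∀ m, 1 ≤ m → m ≤ n → A m = B m) : matProd A n = matProd B n := by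
  unfold matProd
  congr 1
  refine List.map_congr_left fun i hi => ?_
  rw [List.mem_range] at hi
  exact h (i + 1) (Nat.le_add_left _ _) hi

lemma mesn_nonneg (M : Matrix (Fin d) (Fin d) ℂ) : 0 ≤ matEntrySumNorm M :=
  Finset.sum_nonneg fun i _ => Finset.sum_nonneg fun j _ => norm_nonneg _

lemma mesn_entry_le (M : Matrix (Fin d) (Fin d) ℂ) (i j : Fin d) :
    ‖M i j‖ ≤ matEntrySumNorm M := by
  unfold matEntrySumNorm
  calc ‖M i j‖ ≤ ∑ j', ‖M i j'‖ :=
        Finset.single_le_sum (fun j' _ => norm_nonneg _) (Finset.mem_univ j)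
    _ ≤ ∑ i', ∑ j', ‖M i' j'‖ :=
        Finset.single_le_sum (f := fun i' => ∑ j', ‖M i' j'‖)
          (fun i' _ => Finset.sum_nonneg fun j' _ => norm_nonneg _) (Finset.mem_univ i)

lemma mesn_pos {M : Matrix (Fin d) (Fin d) ℂ} (h : M ≠ 0) :
    0 < matEntrySumNorm M := by
  obtain ⟨i, j, hij⟩ : ∃ i j, M i j ≠ 0 := by
    by_contra hc
    push_neg at hc
    exact h (by ext i j; simp [hc i j])
  calc (0:ℝ) < ‖M i j‖ := norm_pos_iff.mpr hij
    _ ≤ _ := mesn_entry_le M i j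

lemma mesn_zero : matEntrySumNorm (0 : Matrix (Fin d) (Fin d) ℂ) = 0 := by
  simp [matEntrySumNorm]

lemma mesn_smul (z : ℂ) (M : Matrix (Fin d) (Fin d) ℂ) :
    matEntrySumNorm (z • M) = ‖z‖ * matEntrySumNorm M := by
  unfold matEntrySumNorm
  rw [Finset.mul_sum]
  refine Finset.sum_congr rfl fun i _ => ?_
  rw [Finset.mul_sum]
  exact Finset.sum_congr rfl fun j _ => by simp [Matrix.smul_apply, _root_.map_mul]

lemma mesn_neg (M : Matrix (Fin d) (Fin d) ℂ) : matEntrySumNorm (-M) = matEntrySumNorm M := by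
  have : (-M : Matrix (Fin d) (Fin d) ℂ) = (-1 : ℂ) • M := by ext i j; simp
  rw [this, mesn_smul]; simp

lemma mesn_smul_real (r : ℝ) (M : Matrix (Fin d) (Fin d) ℂ) :
    matEntrySumNorm (r • M) = |r| * matEntrySumNorm M := by
  have : r • M = (r : ℂ) • M := by
    ext i j; simp [Matrix.smul_apply, Complex.real_smul]
  rw [this, mesn_smul, Complex.norm_real, Real.norm_eq_abs]

lemma mesn_add_le (M N : Matrix (Fin d) (Fin d) ℂ) :
    matEntrySumNorm (M + N) ≤ matEntrySumNorm M + matEntrySumNorm N := by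
  unfold matEntrySumNorm
  rw [← Finset.sum_add_distrib]
  refine Finset.sum_le_sum fun i _ => ?_
  rw [← Finset.sum_add_distrib]
  exact Finset.sum_le_sum fun j _ => by simpa using norm_add_le _ _

lemma mesn_sub_le_add (M N : Matrix (Fin d) (Fin d) ℂ) :
    matEntrySumNorm (M - N) ≤ matEntrySumNorm M + matEntrySumNorm N := by
  rw [sub_eq_add_neg]
  calc matEntrySumNorm (M + -N) ≤ matEntrySumNorm M + matEntrySumNorm (-N) := mesn_add_le M (-N)
    _ = _ := by rw [mesn_neg]

lemma mesn_mul_le (M N : Matrix (Fin d) (Fin d) ℂ) :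
    matEntrySumNorm (M * N) ≤ matEntrySumNorm M * matEntrySumNorm N := by
  unfold matEntrySumNorm
  calc ∑ i, ∑ j, ‖(M * N) i j‖
      ≤ ∑ i, ∑ j, ∑ k, ‖M i k‖ * ‖N k j‖ := by
        refine Finset.sum_le_sum fun i _ => Finset.sum_le_sum fun j _ => ?_
        rw [Matrix.mul_apply]
        refine (norm_sum_le _ _).trans_eq ?_
        exact Finset.sum_congr rfl fun k _ => norm_mul _ _
    _ = ∑ i, ∑ k, ‖M i k‖ * ∑ j, ‖N k j‖ := by
        refine Finset.sum_congr rfl fun i _ => ?_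
        rw [Finset.sum_comm]
        exact Finset.sum_congr rfl fun k _ => by rw [Finset.mul_sum]
    _ ≤ ∑ i, ∑ k, ‖M i k‖ * ∑ k', ∑ j, ‖N k' j‖ := by
        refine Finset.sum_le_sum fun i _ => Finset.sum_le_sum fun k _ => ?_
        refine mul_le_mul_of_nonneg_left ?_ (norm_nonneg _)
        exact Finset.single_le_sum (f := fun k' => ∑ j, ‖N k' j‖)
          (fun k' _ => Finset.sum_nonneg fun j _ => norm_nonneg _) (Finset.mem_univ k)
    _ = _ := by
        simp_rw [← Finset.sum_mul]

/-! ### Measurability and continuity -/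

lemma continuous_entry (i j : Fin d) : Continuous fun M : Matrix (Fin d) (Fin d) ℂ => M i j :=
  ((continuous_apply j).comp (continuous_apply i))

lemma ms_eq :
    (matrixMeasurableSpace (d := d)) = (MeasurableSpace.pi : MeasurableSpace (Fin d → Fin d → ℂ)) := by
  have : BorelSpace (Fin d → Fin d → ℂ) := by infer_instance
  exact this.measurable_eq.symm

lemma measurable_of_entries {α} [MeasurableSpace α] {f : α → Matrix (Fin d) (Fin d) ℂ}
    (h : ∀ i j, Measurable fun a => f a i j) : Measurable f := by
  have heq : (Measurable f) = @Measurable _ _ _ MeasurableSpace.pi f := by rw [ms_eq]; rfl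
  rw [heq]
  exact measurable_pi_lambda f fun i => measurable_pi_lambda _ fun j => h i j

lemma measurable_entry_seq (m : ℕ) (i j : Fin d) :
    Measurable fun A : ℕ → Matrix (Fin d) (Fin d) ℂ => A m i j := by
  have h1 : Measurable fun M : Matrix (Fin d) (Fin d) ℂ => M i j := (continuous_entry i j).measurable
  exact h1.comp (measurable_pi_apply m)

lemma continuous_mesn : Continuous (matEntrySumNorm (d := d)) := by
  unfold matEntrySumNorm
  exact continuous_finset_sum _ fun i _ => continuous_finset_sum _ fun j _ =>
    continuous_norm.comp (continuous_entry i j)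

/-! ### Key deterministic separation lemma -/

lemma key_sep {X A : Matrix (Fin d) (Fin d) ℂ} (hX : X ≠ 0)
    (hE : matEntrySumNorm (A - Complex.I • (1 : Matrix (Fin d) (Fin d) ℂ)) ≤ 1/5) :
    X * A ≠ 0 ∧
    1/2 ≤ matEntrySumNorm ((matEntrySumNorm (X * A))⁻¹ • (X * A) -
      (matEntrySumNorm X)⁻¹ • X) := by
  set c : Matrix (Fin d) (Fin d) ℂ := Complex.I • (1 : Matrix (Fin d) (Fin d) ℂ) with hc
  set E : Matrix (Fin d) (Fin d) ℂ := A - c with hEdef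
  set s := matEntrySumNorm X with hs
  have hs0 : 0 < s := mesn_pos hX
  have hXc : X * c = Complex.I • X := by rw [hc, Matrix.mul_smul, mul_one]
  have hXA : X * A = Complex.I • X + X * E := by
    rw [hEdef, Matrix.mul_sub, hXc]; abel
  have hIX : matEntrySumNorm (Complex.I • X) = s := by
    rw [mesn_smul]; simp; exact hs.symm
  have hXE : matEntrySumNorm (X * E) ≤ s * (1/5) :=
    (mesn_mul_le X E).trans (mul_le_mul_of_nonneg_left hE (le_of_lt hs0))
  set m := matEntrySumNorm (X * A) with hm
  have h1 : s ≤ m + matEntrySumNorm (X * E) := by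
    have e1 : Complex.I • X = (X * A) - (X * E) := by rw [hXA]; abel
    calc s = matEntrySumNorm ((X * A) - (X * E)) := by rw [← e1, hIX]
      _ ≤ m + matEntrySumNorm (X * E) := mesn_sub_le_add _ _
  have hm_lb : s * (4/5) ≤ m := by linarith
  have hm0 : 0 < m := lt_of_lt_of_le (by linarith) hm_lb
  have hXA0 : X * A ≠ 0 := by
    intro h0
    rw [hm, h0, mesn_zero] at hm0
    exact lt_irrefl _ hm0
  have hm_ub : m ≤ s + s * (1/5) := by
    calc m ≤ matEntrySumNorm (Complex.I • X) + matEntrySumNorm (X * E) := by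
          rw [hm, hXA]; exact mesn_add_le _ _
      _ ≤ s + s * (1/5) := by rw [hIX]; linarith
  refine ⟨hXA0, ?_⟩
  set u : Matrix (Fin d) (Fin d) ℂ := (s⁻¹ : ℝ) • X with hu
  set v : Matrix (Fin d) (Fin d) ℂ := Complex.I • u with hv
  set T : Matrix (Fin d) (Fin d) ℂ := (m⁻¹ : ℝ) • (X * A) with hT
  have hinvm : 0 < m⁻¹ := inv_pos.2 hm0
  have hinvs : 0 < s⁻¹ := inv_pos.2 hs0
  -- decomposition
  have e2 : T - v = (m⁻¹ : ℝ) • (X * E) + ((m⁻¹ - s⁻¹ : ℝ)) • (Complex.I • X) := by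
    have hvu : v = (s⁻¹ : ℝ) • (Complex.I • X) := by rw [hv, hu, smul_comm]
    rw [hT, hvu, hXA, smul_add, sub_smul]
    abel
  have hTv : matEntrySumNorm (T - v) ≤ 1/2 := by
    have b1 : matEntrySumNorm ((m⁻¹ : ℝ) • (X * E)) ≤ 1/4 := by
      rw [mesn_smul_real, abs_of_pos hinvm]
      have h2 := mul_le_mul_of_nonneg_left hXE hinvm.le
      have h3 : m⁻¹ * m = 1 := inv_mul_cancel₀ hm0.ne'
      have h4 := mul_le_mul_of_nonneg_left hm_lb hinvm.le
      rw [h3] at h4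
      nlinarith
    have b2 : matEntrySumNorm (((m⁻¹ - s⁻¹ : ℝ)) • (Complex.I • X)) ≤ 1/4 := by
      rw [mesn_smul_real, hIX]
      have e3 : m⁻¹ - s⁻¹ = (s - m) * (m⁻¹ * s⁻¹) := by
        field_simp
      rw [e3, abs_mul, abs_of_pos (mul_pos hinvm hinvs)]
      have habs : |s - m| ≤ s * (1/5) := abs_le.2 ⟨by linarith, by linarith⟩
      have h4 := mul_le_mul_of_nonneg_left hm_lb hinvm.le
      rw [inv_mul_cancel₀ hm0.ne'] at h4
      have hss : s⁻¹ * s = 1 := inv_mul_cancel₀ hs0.ne'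
      calc |s - m| * (m⁻¹ * s⁻¹) * s = |s - m| * m⁻¹ * (s⁻¹ * s) := by ring
        _ = |s - m| * m⁻¹ := by rw [hss, mul_one]
        _ ≤ (s * (1/5)) * m⁻¹ := mul_le_mul_of_nonneg_right habs hinvm.le
        _ ≤ 1/4 := by nlinarith
    have hadd := mesn_add_le ((m⁻¹ : ℝ) • (X * E)) (((m⁻¹ - s⁻¹ : ℝ)) • (Complex.I • X))
    rw [← e2] at hadd
    linarith
  have hvu1 : 1 ≤ matEntrySumNorm (v - u) := by
    have e4 : v - u = (Complex.I - 1) • u := by rw [hv, sub_smul, one_smul]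
    have hu1 : matEntrySumNorm u = 1 := by
      rw [hu, mesn_smul_real, abs_of_pos hinvs, ← hs, inv_mul_cancel₀ hs0.ne']
    rw [e4, mesn_smul, hu1, mul_one]
    have h5 : ‖Complex.I - 1‖ ^ 2 = 2 := by
      rw [Complex.sq_norm]
      simp [Complex.normSq_apply]
      norm_num
    nlinarith [norm_nonneg (Complex.I - 1)]
  have final : matEntrySumNorm (v - u) ≤ matEntrySumNorm (T - v) + matEntrySumNorm (T - u) := by
    have e5 : v - u = -(T - v) + (T - u) := by abel
    calc matEntrySumNorm (v - u) = matEntrySumNorm (-(T - v) + (T - u)) := by rw [← e5]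
      _ ≤ matEntrySumNorm (-(T - v)) + matEntrySumNorm (T - u) := mesn_add_le _ _
      _ = _ := by rw [mesn_neg]
  have : 1/2 ≤ matEntrySumNorm (T - u) := by linarith
  exact this

section Main

variable (hd : 1 ≤ d) (p : Measure ℂ) [IsProbabilityMeasure p]
  (Pstar : Measure (ℕ → Matrix (Fin d) (Fin d) ℂ)) [IsProbabilityMeasure Pstar]

lemma freq (hd : 1 ≤ d) (p : Measure ℂ) [IsProbabilityMeasure p]
    (hsupp : ∀ U : Set ℂ, IsOpen U → U.Nonempty → 0 < p U)
    (Pstar : Measure (ℕ → Matrix (Fin d) (Fin d) ℂ)) [IsProbabilityMeasure Pstar]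
    (hindep : iIndepFun
      (fun (t : ℕ × Fin d × Fin d) (A : ℕ → Matrix (Fin d) (Fin d) ℂ) => A t.1 t.2.1 t.2.2) Pstar)
    (hlaw : ∀ t : ℕ × Fin d × Fin d,
      Pstar.map (fun A => A t.1 t.2.1 t.2.2) = p) :
    ∀ᵐ A ∂Pstar, ∃ᶠ m in atTop, ∀ i j : Fin d,
      ‖A m i j - (Complex.I • (1 : Matrix (Fin d) (Fin d) ℂ)) i j‖
        < 1/(5*(d:ℝ)^2) := by
  classical
  set ε : ℝ := 1/(5*(d:ℝ)^2) with hεdef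
  have hd0 : (0:ℝ) < (d:ℝ) := by exact_mod_cast hd
  have hε : 0 < ε := by positivity
  set c : Matrix (Fin d) (Fin d) ℂ := Complex.I • (1 : Matrix (Fin d) (Fin d) ℂ) with hc
  set sets : (ℕ × Fin d × Fin d) → Set ℂ := fun t => Metric.ball (c t.2.1 t.2.2) ε with hsets
  set f : (ℕ × Fin d × Fin d) → (ℕ → Matrix (Fin d) (Fin d) ℂ) → ℂ :=
    fun t A => A t.1 t.2.1 t.2.2 with hf
  have hfm : ∀ t, Measurable (f t) := fun t => measurable_entry_seq t.1 t.2.1 t.2.2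
  set D : ℕ → Set (ℕ → Matrix (Fin d) (Fin d) ℂ) :=
    fun m => ⋂ t ∈ (({m} : Finset ℕ) ×ˢ (Finset.univ : Finset (Fin d × Fin d))),
      f t ⁻¹' sets t with hD
  have hDmeas : ∀ m, MeasurableSet (D m) := fun m =>
    MeasurableSet.biInter (Finset.countable_toSet _)
      fun t _ => (hfm t) measurableSet_ball
  have hinter : ∀ (T : Finset (ℕ × Fin d × Fin d)),
      Pstar (⋂ t ∈ T, f t ⁻¹' sets t) = ∏ t ∈ T, Pstar (f t ⁻¹' sets t) :=
    fun T => hindep.measure_inter_preimage_eq_mul T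
      (fun t _ => measurableSet_ball)
  have hsingle : ∀ t, Pstar (f t ⁻¹' sets t) = p (sets t) := fun t => by
    rw [← hlaw t]
    exact (Measure.map_apply (hfm t) measurableSet_ball).symm
  set κ : ENNReal := ∏ q : Fin d × Fin d, p (Metric.ball (c q.1 q.2) ε) with hκ
  have hDm : ∀ m, Pstar (D m) = κ := by
    intro m
    rw [hD]
    rw [hinter]
    simp only [hsingle]
    rw [Finset.prod_product]
    rw [Finset.prod_singleton]
  have hκpos : κ ≠ 0 := by
    rw [hκ]
    rw [Finset.prod_ne_zero_iff]
    intro q _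
    exact (hsupp _ Metric.isOpen_ball (Metric.nonempty_ball.2 hε)).ne'
  have hiIndep : iIndepSet D Pstar := by
    rw [iIndepSet_iff_meas_biInter hDmeas]
    intro S
    have hset : (⋂ m ∈ S, D m) = ⋂ t ∈ (S ×ˢ (Finset.univ : Finset (Fin d × Fin d))),
        f t ⁻¹' sets t := by
      ext A
      simp only [hD, Set.mem_iInter, Finset.mem_product, Finset.mem_singleton,
        Finset.mem_univ, and_true]
      constructor
      · intro h t ht
        exact h t.1 ht t rfl
      · intro h m hm t ht
        exact h t (ht ▸ hm)
    rw [hset, hinter, Finset.prod_product]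
    refine Finset.prod_congr rfl fun m _ => ?_
    rw [hDm m, hκ]
    simp only [hsingle]
    rfl
  have htsum : (∑' m, Pstar (D m)) = ⊤ := by
    simp only [hDm]
    exact ENNReal.tsum_const_eq_top_of_ne_zero hκpos
  have hone := measure_limsup_eq_one hDmeas hiIndep htsum
  have hcompl : Pstar (limsup D atTop)ᶜ = 0 := by
    rw [measure_compl (MeasurableSet.measurableSet_limsup fun m => hDmeas m)
      (measure_ne_top _ _), hone, measure_univ]
    simp
  rw [ae_iff]
  refine measure_mono_null ?_ hcompl
  intro A hA
  simp only [Set.mem_setOf_eq] at hA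
  simp only [Set.mem_compl_iff, mem_limsup_iff_frequently_mem]
  intro hfreq
  apply hA
  refine hfreq.mono fun m hm => ?_
  intro i j
  have := Set.mem_iInter₂.1 hm (m, i, j) (by simp)
  simpa [hf, hsets, Complex.dist_eq] using this

lemma null_step (hd : 1 ≤ d) (hatom : ∀ z : ℂ, p {z} = 0)
    (hindep : iIndepFun
      (fun (t : ℕ × Fin d × Fin d) (A : ℕ → Matrix (Fin d) (Fin d) ℂ) => A t.1 t.2.1 t.2.2) Pstar)
    (hlaw : ∀ t : ℕ × Fin d × Fin d,
      Pstar.map (fun A => A t.1 t.2.1 t.2.2) = p) (n : ℕ) :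
    Pstar {A | matProd A n ≠ 0 ∧ matProd A (n + 1) = 0} = 0 := by
  classical
  set ι := Fin (n + 1) × Fin d × Fin d with hι
  set Φ : (ℕ → Matrix (Fin d) (Fin d) ℂ) → (ι → ℂ) :=
    fun A t => A ((t.1 : ℕ) + 1) t.2.1 t.2.2 with hΦdef
  have hΦ : Measurable Φ :=
    measurable_pi_lambda _ fun t => measurable_entry_seq _ _ _
  set ext : (ι → ℂ) → (ℕ → Matrix (Fin d) (Fin d) ℂ) :=
    fun x m => Matrix.of fun i j =>
      if h : m - 1 < n + 1 ∧ 1 ≤ m then x (⟨m - 1, h.1⟩, i, j) else 0 with hextdef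
  -- `ext (Φ A)` agrees with `A` on indices `1..n+1`
  have hext : ∀ (A : ℕ → Matrix (Fin d) (Fin d) ℂ) m, 1 ≤ m → m ≤ n + 1 →
      ext (Φ A) m = A m := by
    intro A m h1 h2
    ext i j
    have hcond : m - 1 < n + 1 ∧ 1 ≤ m := ⟨by omega, h1⟩
    show (if h : m - 1 < n + 1 ∧ 1 ≤ m then Φ A (⟨m - 1, h.1⟩, i, j) else 0) = A m i j
    rw [dif_pos hcond]
    show A ((m - 1) + 1) i j = A m i j
    congr 1
    omega
  have hprod : ∀ (A : ℕ → Matrix (Fin d) (Fin d) ℂ) k, k ≤ n + 1 →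
      matProd (ext (Φ A)) k = matProd A k := fun A k hk =>
    matProd_congr fun m h1 h2 => hext A m h1 (h2.trans hk)
  set E' : Set (ι → ℂ) := {x | matProd (ext x) n ≠ 0 ∧ matProd (ext x) (n + 1) = 0} with hE'
  have hpre : {A | matProd A n ≠ 0 ∧ matProd A (n + 1) = 0} = Φ ⁻¹' E' := by
    ext A
    simp only [Set.mem_setOf_eq, Set.mem_preimage, hE']
    rw [hprod A n (Nat.le_succ n), hprod A (n + 1) le_rfl]
  -- continuity of the entries of partial products
  have hBcont : ∀ k, k ≤ n + 1 → ∀ i j, Continuous fun x : ι → ℂ => matProd (ext x) k i j := by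
    intro k
    induction k with
    | zero =>
      intro _ i j
      simp only [matProd_zero]
      exact continuous_const
    | succ k ih =>
      intro hk i j
      have hcond : (k + 1) - 1 < n + 1 ∧ 1 ≤ k + 1 := ⟨by omega, by omega⟩
      simp only [matProd_succ, Matrix.mul_apply]
      refine continuous_finset_sum _ fun l _ => Continuous.mul (ih (by omega) i l) ?_
      have hentry : (fun x : ι → ℂ => ext x (k + 1) l j) =
          fun x : ι → ℂ => x (⟨(k + 1) - 1, hcond.1⟩, l, j) := by
        funext x
        show (if h : (k + 1) - 1 < n + 1 ∧ 1 ≤ k + 1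
          then x (⟨(k + 1) - 1, h.1⟩, l, j) else 0) = _
        rw [dif_pos hcond]
      rw [hentry]
      exact continuous_apply _
  have hE'meas : MeasurableSet E' := by
    have h1 : MeasurableSet {x : ι → ℂ | matProd (ext x) n ≠ 0} := by
      have : {x : ι → ℂ | matProd (ext x) n ≠ 0}
          = ⋃ i, ⋃ j, {x : ι → ℂ | matProd (ext x) n i j ≠ 0} := by
        ext x
        simp only [Set.mem_setOf_eq, Set.mem_iUnion]
        constructor
        · intro hx
          by_contra hc
          push_neg at hc
          exact hx (by ext i j; simpa using hc i j)
        · rintro ⟨i, j, hij⟩ h0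
          exact hij (by rw [h0]; simp)
      rw [this]
      exact MeasurableSet.iUnion fun i => MeasurableSet.iUnion fun j =>
        ((hBcont n (Nat.le_succ n) i j).measurable (measurableSet_singleton 0).compl)
    have h2 : MeasurableSet {x : ι → ℂ | matProd (ext x) (n + 1) = 0} := by
      have : {x : ι → ℂ | matProd (ext x) (n + 1) = 0}
          = ⋂ i, ⋂ j, {x : ι → ℂ | matProd (ext x) (n + 1) i j = 0} := by
        ext x
        simp only [Set.mem_setOf_eq, Set.mem_iInter]
        constructor
        · intro hx i j
          rw [hx]; simp
        · intro hx
          ext i j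
          simpa using hx i j
      rw [this]
      exact MeasurableSet.iInter fun i => MeasurableSet.iInter fun j =>
        ((hBcont (n + 1) le_rfl i j).measurable (measurableSet_singleton 0))
    exact h1.inter h2
  -- the law of `Φ` is the product measure
  have hmap : Pstar.map Φ = Measure.pi (fun _ : ι => p) := by
    refine (Measure.pi_eq fun s hs => ?_).symm
    rw [Measure.map_apply hΦ (MeasurableSet.univ_pi hs)]
    set e : ι → ℕ × Fin d × Fin d := fun t => ((t.1 : ℕ) + 1, t.2) with he'
    have he : Function.Injective e := by
      intro a b h
      have h1 : (e a).1 = (e b).1 := congrArg Prod.fst h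
      have h2 : (e a).2 = (e b).2 := congrArg Prod.snd h
      simp only [he'] at h1 h2
      exact Prod.ext (Fin.ext (by omega)) h2
    set sets' : (ℕ × Fin d × Fin d) → Set ℂ :=
      fun t => if h : t.1 - 1 < n + 1 then s (⟨t.1 - 1, h⟩, t.2) else Set.univ with hsets'def
    have hsets' : ∀ u : ι, sets' (e u) = s u := by
      intro u
      have hlt : (e u).1 - 1 < n + 1 := by
        show ((u.1 : ℕ) + 1) - 1 < n + 1
        omega
      show (if h : (e u).1 - 1 < n + 1 then s (⟨(e u).1 - 1, h⟩, (e u).2) else Set.univ) = s u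
      rw [dif_pos hlt]
      have huv : ((⟨(e u).1 - 1, hlt⟩ : Fin (n + 1)), (e u).2) = u := by
        refine Prod.ext (Fin.ext ?_) rfl
        show ((u.1 : ℕ) + 1) - 1 = (u.1 : ℕ)
        omega
      rw [huv]
    have hsets'meas : ∀ t, MeasurableSet (sets' t) := by
      intro t
      show MeasurableSet (if h : t.1 - 1 < n + 1 then s (⟨t.1 - 1, h⟩, t.2) else Set.univ)
      split
      · exact hs _
      · exact MeasurableSet.univ
    have hpre2 : Φ ⁻¹' Set.pi Set.univ s =
        ⋂ t ∈ Finset.univ.image e, (fun A : ℕ → Matrix (Fin d) (Fin d) ℂ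
          => A t.1 t.2.1 t.2.2) ⁻¹' sets' t := by
      ext A
      simp only [Set.mem_preimage, Set.mem_pi, Set.mem_univ, forall_true_left, Set.mem_iInter,
        Finset.mem_image, Finset.mem_univ, true_and]
      constructor
      · rintro h t ⟨u, rfl⟩
        rw [hsets' u]
        exact h u
      · intro h u
        have := h (e u) ⟨u, rfl⟩
        rwa [hsets' u] at this
    rw [hpre2, hindep.measure_inter_preimage_eq_mul _ (fun t _ => hsets'meas t),
      Finset.prod_image (fun a _ b _ hab => he hab)]
    refine Finset.prod_congr rfl fun u _ => ?_
    rw [hsets' u, ← hlaw (e u),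
      Measure.map_apply (measurable_entry_seq (e u).1 (e u).2.1 (e u).2.2) (hs u)]
  rw [hpre, ← Measure.map_apply hΦ hE'meas, hmap]
  -- now kill `E'` under the product measure
  set last : Fin (n + 1) := ⟨n, Nat.lt_succ_self n⟩ with hlast
  set j₀ : Fin d := ⟨0, hd⟩ with hj₀
  set B : (ι → ℂ) → Matrix (Fin d) (Fin d) ℂ := fun x => matProd (ext x) n with hB
  have hB_local : ∀ x x' : ι → ℂ, (∀ t : ι, t.1 ≠ last → x t = x' t) → B x = B x' := by
    intro x x' hxx
    refine matProd_congr fun m h1 h2 => ?_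
    ext i j
    show (if h : m - 1 < n + 1 ∧ 1 ≤ m then x (⟨m - 1, h.1⟩, i, j) else 0)
       = (if h : m - 1 < n + 1 ∧ 1 ≤ m then x' (⟨m - 1, h.1⟩, i, j) else 0)
    by_cases hc : m - 1 < n + 1 ∧ 1 ≤ m
    · rw [dif_pos hc, dif_pos hc]
      exact hxx _ (Fin.ne_of_val_ne (by show m - 1 ≠ n; omega))
    · rw [dif_neg hc, dif_neg hc]
  have hentry_last : ∀ (x : ι → ℂ) l jj, ext x (n + 1) l jj = x (last, l, jj) := by
    intro x l jj
    have hc : (n + 1) - 1 < n + 1 ∧ 1 ≤ n + 1 := ⟨by omega, by omega⟩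
    show (if h : (n + 1) - 1 < n + 1 ∧ 1 ≤ n + 1 then x (⟨(n + 1) - 1, h.1⟩, l, jj) else 0) = _
    rw [dif_pos hc]
    have hfin : (⟨(n + 1) - 1, hc.1⟩ : Fin (n + 1)) = last := by
      rw [hlast]
      exact Fin.mk_eq_mk.mpr (by omega)
    rw [hfin]
  set F : Fin d → Fin d → Set (ι → ℂ) := fun r k₀ =>
    {x | B x r k₀ ≠ 0 ∧ ∑ l, B x r l * x (last, l, j₀) = 0} with hF
  have hsub : E' ⊆ ⋃ r, ⋃ k₀, F r k₀ := by
    rintro x ⟨hne, hzero⟩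
    obtain ⟨r, k₀, hrk⟩ : ∃ r k₀, B x r k₀ ≠ 0 := by
      by_contra hc
      push_neg at hc
      exact hne (by ext i j; simpa using hc i j)
    refine Set.mem_iUnion.2 ⟨r, Set.mem_iUnion.2 ⟨k₀, hrk, ?_⟩⟩
    have h0 : matProd (ext x) (n + 1) r j₀ = 0 := by rw [hzero]; simp
    rw [matProd_succ, Matrix.mul_apply] at h0
    calc ∑ l, B x r l * x (last, l, j₀)
        = ∑ l, matProd (ext x) n r l * ext x (n + 1) l j₀ :=
          Finset.sum_congr rfl fun l _ => by rw [hentry_last]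
      _ = 0 := h0
  have hF_meas : ∀ r k₀, MeasurableSet (F r k₀) := by
    intro r k₀
    have hc1 : Continuous fun x : ι → ℂ => B x r k₀ := hBcont n (Nat.le_succ n) r k₀
    have hc2 : Continuous fun x : ι → ℂ => ∑ l, B x r l * x (last, l, j₀) :=
      continuous_finset_sum _ fun l _ =>
        ((hBcont n (Nat.le_succ n) r l).mul (continuous_apply _))
    exact ((hc1.measurable (measurableSet_singleton 0).compl)).inter
      (hc2.measurable (measurableSet_singleton 0))
  have hFnull : ∀ r k₀, Measure.pi (fun _ : ι => p) (F r k₀) = 0 := by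
    intro r k₀
    set t₀ : ι := (last, k₀, j₀) with ht₀
    set q : ι → Prop := fun t => t ≠ t₀ with hq
    haveI : DecidablePred q := Classical.decPred q
    haveI huniq : Unique {t : ι // ¬ q t} :=
      { default := ⟨t₀, by simp [hq]⟩
        uniq := by
          rintro ⟨t, ht⟩
          simp only [hq, not_not] at ht
          exact Subtype.ext ht }
    set π := MeasurableEquiv.piEquivPiSubtypeProd (fun _ : ι => ℂ) q with hπ
    have MP := measurePreserving_piEquivPiSubtypeProd (fun _ : ι => p) q
    set S := ⇑π.symm ⁻¹' (F r k₀) with hS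
    have hSmeas : MeasurableSet S := π.symm.measurable (hF_meas r k₀)
    have hFS : F r k₀ = ⇑π ⁻¹' S := by
      rw [hS]
      ext x
      simp
    rw [hFS, MP.measure_preimage hSmeas.nullMeasurableSet, Measure.measure_prod_null hSmeas]
    refine ae_of_all _ fun y => ?_
    set x₁ : ι → ℂ := π.symm (y, fun _ => 0) with hx₁
    have hxt : ∀ (z : {t : ι // ¬ q t} → ℂ) (t : ι),
        (π.symm (y, z)) t = if h : q t then y ⟨t, h⟩ else z ⟨t, h⟩ := fun z t => rfl
    have hagree : ∀ (z : {t : ι // ¬ q t} → ℂ) (t : ι), t ≠ t₀ →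
        (π.symm (y, z)) t = x₁ t := by
      intro z t ht
      rw [hx₁, hxt, hxt, dif_pos ht, dif_pos ht]
    have ht₀z : ∀ (z : {t : ι // ¬ q t} → ℂ), (π.symm (y, z)) t₀ = z default := by
      intro z
      rw [hxt, dif_neg (by simp [hq])]
      exact congrArg z (Subsingleton.elim _ _)
    set G : ℂ := B x₁ r k₀ with hG
    set H : ℂ := ∑ l ∈ Finset.univ.erase k₀, B x₁ r l * x₁ (last, l, j₀) with hH
    have hslice : (Prod.mk y ⁻¹' S) ⊆ {z | G ≠ 0 ∧ z default = -H / G} := by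
      intro z hz
      have hzF : (π.symm (y, z)) ∈ F r k₀ := hz
      obtain ⟨hz1, hz2⟩ := hzF
      have hBx : B (π.symm (y, z)) = B x₁ :=
        hB_local _ _ (fun t ht => hagree z t (fun h => ht (by rw [h])))
      have hG0 : G ≠ 0 := by rw [hG, ← hBx]; exact hz1
      refine ⟨hG0, ?_⟩
      have hsplit : ∑ l, B (π.symm (y, z)) r l * (π.symm (y, z)) (last, l, j₀)
          = G * z default + H := by
        rw [← Finset.add_sum_erase Finset.univ _ (Finset.mem_univ k₀)]
        congr 1
        · rw [hBx, ht₀z z]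
        · refine Finset.sum_congr rfl fun l hl => ?_
          have hlk : l ≠ k₀ := Finset.ne_of_mem_erase hl
          rw [hBx, hagree z (last, l, j₀)
            (fun h => hlk (congrArg (fun u : ι => u.2.1) h))]
      rw [hsplit] at hz2
      rw [eq_div_iff hG0]
      linear_combination hz2
    refine measure_mono_null hslice ?_
    by_cases hG0 : G = 0
    · have hempty : {z : {t : ι // ¬ q t} → ℂ | G ≠ 0 ∧ z default = -H / G} = ∅ := by
        ext z
        simp [hG0]
      rw [hempty]
      exact measure_empty
    · have hsub2 : {z : {t : ι // ¬ q t} → ℂ | G ≠ 0 ∧ z default = -H / G}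
          ⊆ (MeasurableEquiv.funUnique {t : ι // ¬ q t} ℂ) ⁻¹' {-H / G} :=
        fun z hz => hz.2
      refine measure_mono_null hsub2 ?_
      have := (measurePreserving_funUnique p {t : ι // ¬ q t}).measure_preimage
        (s := {-H / G}) (measurableSet_singleton _).nullMeasurableSet
      have h0 := this.trans (hatom _)
      convert h0 using 2
      congr!
  refine measure_mono_null hsub ?_
  refine measure_iUnion_null fun r => measure_iUnion_null fun k₀ => hFnull r k₀

end Main
end NPDAS

open NPDAS

/-- Corollary 3.3: if `P*` makes all the entries of all the matrices
`A_1, A_2, …` i.i.d. with common law `p`, a non-atomic Borel probability measure on `ℂ`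
with full topological support, then `P*`-almost surely `P_n ≠ 0` for every `n` and
`P_n/‖P_n‖` diverges. -/
theorem normalized_product_diverges_almost_surely {d : ℕ} (hd : 1 ≤ d)
    (p : Measure ℂ) [IsProbabilityMeasure p]
    (hatom : ∀ z : ℂ, p {z} = 0)
    (hsupp : ∀ U : Set ℂ, IsOpen U → U.Nonempty → 0 < p U)
    (Pstar : Measure (ℕ → Matrix (Fin d) (Fin d) ℂ)) [IsProbabilityMeasure Pstar]
    (hindep : iIndepFun
      (fun (t : ℕ × Fin d × Fin d) (A : ℕ → Matrix (Fin d) (Fin d) ℂ) => A t.1 t.2.1 t.2.2) Pstar)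
    (hlaw : ∀ t : ℕ × Fin d × Fin d,
      Pstar.map (fun A => A t.1 t.2.1 t.2.2) = p) :
    ∀ᵐ A ∂Pstar, (∀ n, matProd A n ≠ 0) ∧
      ¬ ∃ Q : Matrix (Fin d) (Fin d) ℂ,
        Tendsto (fun n => (matEntrySumNorm (matProd A n))⁻¹ • matProd A n)
          atTop (nhds Q) := by
  have h1 : ∀ᵐ A ∂Pstar, ∀ n, ¬(matProd A n ≠ 0 ∧ matProd A (n + 1) = 0) := by
    rw [ae_all_iff]
    intro n
    have hns := null_step p Pstar hd hatom hindep hlaw n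
    rw [ae_iff]
    convert hns using 2
    ext A
    simp
  have h2 := freq hd p hsupp Pstar hindep hlaw
  filter_upwards [h1, h2] with A hA1 hA2
  set j₀ : Fin d := ⟨0, hd⟩ with hj₀
  have hPne : ∀ n, matProd A n ≠ 0 := by
    intro n
    induction n with
    | zero =>
      rw [matProd_zero]
      intro h0
      have h1' := congrFun (congrFun h0 j₀) j₀
      simp [Matrix.one_apply] at h1'
    | succ n ih =>
      intro h0
      exact hA1 n ⟨ih, h0⟩
  refine ⟨hPne, ?_⟩
  rintro ⟨Q, hQ⟩
  set R : ℕ → Matrix (Fin d) (Fin d) ℂ :=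
    fun n => (matEntrySumNorm (matProd A n))⁻¹ • matProd A n with hR
  have hsub : Tendsto (fun n => R (n + 1) - R n) atTop (nhds 0) := by
    have h := (hQ.comp (tendsto_add_atTop_nat 1)).sub hQ
    simpa using h
  have hnorm : Tendsto (fun n => matEntrySumNorm (R (n + 1) - R n)) atTop (nhds 0) := by
    have h := ((continuous_mesn (d := d)).tendsto 0).comp hsub
    simpa [mesn_zero, Function.comp_def] using h
  have hev : ∀ᶠ n in atTop, matEntrySumNorm (R (n + 1) - R n) < 1/2 :=
    hnorm.eventually (gt_mem_nhds (by norm_num))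
  obtain ⟨N, hN⟩ := eventually_atTop.1 hev
  obtain ⟨m, hmN, hm⟩ := (frequently_atTop.1 hA2) (N + 1)
  set n := m - 1 with hn
  have hm1 : m = n + 1 := by omega
  have hd0 : (0:ℝ) < (d:ℝ) := by exact_mod_cast hd
  have hE : matEntrySumNorm (A m - Complex.I • (1 : Matrix (Fin d) (Fin d) ℂ)) ≤ 1/5 := by
    unfold matEntrySumNorm
    calc ∑ i, ∑ j, ‖(A m - Complex.I • (1 : Matrix (Fin d) (Fin d) ℂ)) i j‖
        ≤ ∑ _i : Fin d, ∑ _j : Fin d, 1/(5*(d:ℝ)^2) := by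
          refine Finset.sum_le_sum fun i _ => Finset.sum_le_sum fun j _ => ?_
          have h := (hm i j).le
          simpa [Matrix.sub_apply] using h
      _ = (d:ℝ) * ((d:ℝ) * (1/(5*(d:ℝ)^2))) := by
          simp [Finset.sum_const, Finset.card_univ]
      _ = 1/5 := by
          field_simp
  rw [hm1] at hE
  have hks := key_sep (hPne n) hE
  have hrew : matProd A n * A (n + 1) = matProd A (n + 1) := (matProd_succ A n).symm
  have h12 := hks.2
  rw [hrew] at h12
  have hNn := hN n (by omega)
  exact absurd h12 (not_le.2 hNn)
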